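/- If a dimensional mapping dim : Borel sets of X → [0,∞) satisfies countable stability (dim(⋃ᵢ Aᵢ) = supᵢ dim(Aᵢ) for countable families), and νₙ → ν setwise (i.e., νₙ(A) → ν(A) for every Borel set A), then liminf_{n→∞} dim^U(νₙ) ≥ dim^U(ν), where dim^U(μ) = inf{dim(A) : A Borel, μ(X \ A) = 0}. -/
import Mathlib


open MeasureTheory Filter Set
open scoped ENNReal NNReal Topology

/-- The upper measure-dimension mapping induced from a dimensional mapping `dim`:
`dim^U(μ) = inf {dim A : A Borel, μ(X \ A) = 0}`. -/
noncomputable def dimU {X : Type*} [MeasurableSpace X] (dim : Set X → ℝ≥0∞)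
    (μ : Measure X) : ℝ≥0∞ :=
  sInf {d | ∃ A : Set X, MeasurableSet A ∧ μ Aᶜ = 0 ∧ dim A = d}

/-- Setwise convergence of measures: `νₙ(A) → ν(A)` for every Borel set `A`. -/
def SetwiseTendsto {X : Type*} [MeasurableSpace X] (ν : ℕ → Measure X) (μ : Measure X) : Prop :=
  ∀ A : Set X, MeasurableSet A → Tendsto (fun n => ν n A) atTop (nhds (μ A))

/-- Countable stability of a dimensional mapping on Borel sets. -/
def CountablyStable {X : Type*} [MeasurableSpace X] (dim : Set X → ℝ≥0∞) : Prop :=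
  ∀ A : ℕ → Set X, (∀ i, MeasurableSet (A i)) → dim (⋃ i, A i) = ⨆ i, dim (A i)

/-- If `dim` is countably stable and `νₙ → ν` setwise, then
`liminf dim^U(νₙ) ≥ dim^U(ν)`. -/
theorem dimU_lower_semicontinuous_setwise {X : Type*} [MetricSpace X] [MeasurableSpace X]
    [BorelSpace X] (dim : Set X → ℝ≥0∞) (hdim : CountablyStable dim)
    (ν : ℕ → Measure X) (μ : Measure X) (hconv : SetwiseTendsto ν μ) :
    dimU dim μ ≤ atTop.liminf (fun n => dimU dim (ν n)) := by
  set L := atTop.liminf (fun n => dimU dim (ν n)) with hL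
  refine ENNReal.le_of_forall_pos_le_add fun ε hε hLlt => ?_
  have hfreq : ∃ᶠ n in atTop, dimU dim (ν n) < L + ε :=
    frequently_lt_of_liminf_lt (by isBoundedDefault)
      (ENNReal.lt_add_right hLlt.ne (by exact_mod_cast hε.ne'))
  obtain ⟨φ, hφmono, hφ⟩ := Filter.extraction_of_frequently_atTop hfreq
  have hpick : ∀ k, ∃ A : Set X, MeasurableSet A ∧ ν (φ k) Aᶜ = 0 ∧ dim A < L + ε := by
    intro k
    obtain ⟨d, ⟨A, hm, hn, hd⟩, hlt⟩ := sInf_lt_iff.mp (hφ k)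
    exact ⟨A, hm, hn, hd ▸ hlt⟩
  choose A hmeas hnull hdlt using hpick
  set B := ⋃ k, A k with hB
  have hBmeas : MeasurableSet B := MeasurableSet.iUnion hmeas
  have hzero : ∀ k, ν (φ k) Bᶜ = 0 := fun k =>
    measure_mono_null (compl_subset_compl.mpr (subset_iUnion A k)) (hnull k)
  have ht : Tendsto (fun k => ν (φ k) Bᶜ) atTop (nhds (μ Bᶜ)) :=
    (hconv Bᶜ hBmeas.compl).comp hφmono.tendsto_atTop
  have hμB : μ Bᶜ = 0 := by
    have ht0 : Tendsto (fun _ : ℕ => (0 : ℝ≥0∞)) atTop (nhds (μ Bᶜ)) := by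
      simpa [funext hzero] using ht
    exact (tendsto_nhds_unique tendsto_const_nhds ht0).symm
  calc dimU dim μ ≤ dim B := sInf_le ⟨B, hBmeas, hμB, rfl⟩
    _ = ⨆ k, dim (A k) := hdim A hmeas
    _ ≤ L + ε := iSup_le fun k => (hdlt k).le
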